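/- For the learning rates α_t = (H+1)/(H+t) with H ≥ 1 and weights α_t^i := α_i · ∏_{j=i+1}^t (1 − α_j), for every t ≥ 1 the maximum weight satisfies max_{1 ≤ i ≤ t} α_t^i ≤ 2H/t. -/

import Mathlib

open Finset

noncomputable def lr (H : ℕ) (t : ℕ) : ℝ := ((H : ℝ) + 1) / ((H : ℝ) + t)

noncomputable def w (H : ℕ) (t i : ℕ) : ℝ :=
  lr H i * ∏ j ∈ Finset.Icc (i + 1) t, (1 - lr H j)

noncomputable def w0 (H : ℕ) (t : ℕ) : ℝ :=
  ∏ j ∈ Finset.Icc 1 t, (1 - lr H j)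

lemma one_sub_lr_nonneg (H j : ℕ) (hj : 1 ≤ j) : 0 ≤ 1 - lr H j := by
  unfold lr
  rw [sub_nonneg, div_le_one (by positivity)]
  have : (1:ℝ) ≤ j := by exact_mod_cast hj
  linarith

lemma step (H i : ℕ) (hi : 1 ≤ i) :
    lr H i * (1 - lr H (i+1)) ≤ lr H (i+1) := by
  unfold lr
  have h1 : (0:ℝ) < (H:ℝ) + i := by
    have : (1:ℝ) ≤ i := by exact_mod_cast hi
    positivity
  have h2 : (0:ℝ) < (H:ℝ) + ((i:ℕ)+1 : ℕ) := by push_cast; positivity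
  push_cast at h2 ⊢
  have hi' : (1:ℝ) ≤ i := by exact_mod_cast hi
  have hH' : (0:ℝ) ≤ H := by positivity
  rw [div_mul_eq_mul_div, div_le_div_iff₀ (by linarith) (by linarith)]
  have key : (1:ℝ) - (↑H + 1) / (↑H + (↑i + 1)) = i / (↑H + (↑i + 1)) := by
    field_simp
    ring
  rw [key]
  have e : ((H:ℝ) + 1) * ((i:ℝ) / ((H:ℝ) + ((i:ℝ) + 1))) * ((H:ℝ) + ((i:ℝ) + 1)) = ((H:ℝ) + 1) * i := by
    field_simp
  rw [e]
  nlinarith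

lemma w_le_lr (H : ℕ) : ∀ t i, 1 ≤ i → i ≤ t → w H t i ≤ lr H t := by
  intro t
  induction t with
  | zero => intro i hi hit; omega
  | succ n ih =>
    intro i hi hit
    rcases eq_or_lt_of_le hit with h | h
    · subst h
      unfold w
      rw [Finset.Icc_eq_empty (by omega : ¬ (n+1+1 ≤ n+1)), Finset.prod_empty, mul_one]
    · have hin : i ≤ n := by omega
      have hn1 : 1 ≤ n := le_trans hi hin
      have hsplit : w H (n+1) i = w H n i * (1 - lr H (n+1)) := by
        unfold w
        rw [Finset.prod_Icc_succ_top (by omega), mul_assoc]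
      rw [hsplit]
      have h1 : w H n i * (1 - lr H (n+1)) ≤ lr H n * (1 - lr H (n+1)) := by
        apply mul_le_mul_of_nonneg_right (ih i hi hin)
        exact one_sub_lr_nonneg H (n+1) (by omega)
      exact le_trans h1 (step H n hn1)

theorem max_weight_le (H : ℕ) (hH : 1 ≤ H) (t : ℕ) (ht : 1 ≤ t) :
    ∀ i ∈ Finset.Icc 1 t, w H t i ≤ 2 * (H : ℝ) / t := by
  intro i hi
  rw [Finset.mem_Icc] at hi
  have h1 := w_le_lr H t i hi.1 hi.2
  refine le_trans h1 ?_
  unfold lr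
  have hH' : (1:ℝ) ≤ H := by exact_mod_cast hH
  have ht' : (1:ℝ) ≤ t := by exact_mod_cast ht
  rw [div_le_div_iff₀ (by linarith) (by linarith)]
  nlinarith
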